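/- Let N > n. There is a constant C = C(N) > 0 such that for every g ∈ L¹_loc(ℝⁿ), every J ∈ ℤ, v ∈ ℤⁿ, every integer k ≥ J, and every x in the dyadic cube Q_{J,v}, one has ∫_{ℝⁿ} 2^{kn}|g(y)| (1 + 2^k|x−y|)^{−N} dy ≤ C Σ_{w∈ℤⁿ} (1 + |v−w|)^{−(N−n)} · M(𝟙_{Q_{J,w}} · g)(x), where M is the Hardy–Littlewood maximal operator. -/

import Mathlib

open MeasureTheory Metric
open scoped ENNReal

/-- The open dyadic cube `Q_{J,v} = 2^{−J}v + (0, 2^{−J})ⁿ`. -/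
def dyadicCube (n : ℕ) (J : ℤ) (v : Fin n → ℤ) : Set (EuclideanSpace ℝ (Fin n)) :=
  {x | ∀ i, (2 : ℝ) ^ (-J) * (v i : ℝ) < x i ∧ x i < (2 : ℝ) ^ (-J) * ((v i : ℝ) + 1)}

/-- An integer vector viewed as a point of Euclidean space. -/
noncomputable def intVec (n : ℕ) (v : Fin n → ℤ) : EuclideanSpace ℝ (Fin n) :=
  WithLp.toLp 2 (fun i => (v i : ℝ))

/-- The Hardy–Littlewood maximal function
`M g (x) = sup_{R>0} |B(0,R)|⁻¹ ∫_{B(x,R)} g`. -/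
noncomputable def HLmax {n : ℕ} (g : EuclideanSpace ℝ (Fin n) → ℝ≥0∞)
    (x : EuclideanSpace ℝ (Fin n)) : ℝ≥0∞ :=
  ⨆ R : Set.Ioi (0 : ℝ), (volume (Metric.ball x (R : ℝ)))⁻¹ * ∫⁻ y in Metric.ball x (R : ℝ), g y

lemma aux_hl {n : ℕ} (h : EuclideanSpace ℝ (Fin n) → ℝ≥0∞) (x : EuclideanSpace ℝ (Fin n))
    {R : ℝ} (hR : 0 < R) :
    ∫⁻ y in Metric.ball x R, h y ≤ volume (Metric.ball x R) * HLmax h x := by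
  have h1 : (volume (Metric.ball x R))⁻¹ * ∫⁻ y in Metric.ball x R, h y ≤ HLmax h x :=
    le_iSup (fun R : Set.Ioi (0:ℝ) =>
      (volume (Metric.ball x (R : ℝ)))⁻¹ * ∫⁻ y in Metric.ball x (R : ℝ), h y)
      (⟨R, hR⟩ : Set.Ioi (0:ℝ))
  have hv0 : volume (Metric.ball x R) ≠ 0 := (measure_ball_pos volume x hR).ne'
  have hvt : volume (Metric.ball x R) ≠ ⊤ := measure_ball_lt_top.ne
  calc ∫⁻ y in Metric.ball x R, h y
      = volume (Metric.ball x R) * ((volume (Metric.ball x R))⁻¹ * ∫⁻ y in Metric.ball x R, h y) := by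
        rw [← mul_assoc, ENNReal.mul_inv_cancel hv0 hvt, one_mul]
    _ ≤ volume (Metric.ball x R) * HLmax h x := mul_le_mul_right h1 _

lemma my_ball_vol (n : ℕ) (x : EuclideanSpace ℝ (Fin n)) {r : ℝ} (hr : 0 < r) :
    volume (ball x r) = ENNReal.ofReal (r ^ n) * volume (ball (0 : EuclideanSpace ℝ (Fin n)) 1) := by
  cases n with
  | zero =>
    have h1 : ∀ (c : EuclideanSpace ℝ (Fin 0)) (s : ℝ), 0 < s → ball c s = Set.univ := by
      intro c s hs
      ext y
      simp [Metric.mem_ball, show y = c from Subsingleton.elim _ _, hs]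
    rw [h1 x r hr, h1 0 1 one_pos]
    simp
  | succ m =>
    rw [Measure.addHaar_ball volume x hr.le]
    congr 2
    simp [finrank_euclideanSpace_fin]

lemma exp_calc {N : ℝ} (n : ℕ) (k : ℤ) (j : ℕ) :
    ((2:ℝ)^((k:ℝ)*(n:ℝ)) * ((2:ℝ)^((j:ℝ)-1))^(-N)) * (2 * (2:ℝ)^((j:ℤ)-k))^n
      = (2:ℝ)^(N+(n:ℝ)) * ((2:ℝ)^((n:ℝ)-N))^j := by
  have h2 : (0:ℝ) < 2 := two_pos
  have hz : (2:ℝ)^((j:ℤ)-k) = (2:ℝ)^((j:ℝ)-(k:ℝ)) := by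
    rw [← Real.rpow_intCast 2 ((j:ℤ)-k)]; push_cast; ring_nf
  have h1 : (2 * (2:ℝ)^((j:ℤ)-k)) = (2:ℝ)^((j:ℝ)-(k:ℝ)+1) := by
    rw [hz, Real.rpow_add h2, Real.rpow_one]; ring
  rw [h1, ← Real.rpow_natCast ((2:ℝ)^((j:ℝ)-(k:ℝ)+1)) n, ← Real.rpow_mul h2.le,
    ← Real.rpow_mul h2.le, ← Real.rpow_natCast ((2:ℝ)^((n:ℝ)-N)) j, ← Real.rpow_mul h2.le,
    ← Real.rpow_add h2, ← Real.rpow_add h2]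
  rw [← Real.rpow_add h2]; congr 1; ring

lemma peetre_classical {n : ℕ} {N : ℝ} (hN : (n:ℝ) < N) (k : ℤ)
    (h : EuclideanSpace ℝ (Fin n) → ℝ≥0∞) (hh : Measurable h)
    (x : EuclideanSpace ℝ (Fin n)) :
    ∫⁻ y, ENNReal.ofReal ((2:ℝ)^((k:ℝ)*(n:ℝ)) * (1 + (2:ℝ)^(k:ℝ) * ‖x - y‖)^(-N)) * h y
      ≤ ENNReal.ofReal ((2:ℝ)^(N+(n:ℝ)) * (1 - (2:ℝ)^((n:ℝ)-N))⁻¹) *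
        (volume (ball (0:EuclideanSpace ℝ (Fin n)) 1) * HLmax h x) := by
  have h2 : (0:ℝ) < 2 := two_pos
  set ρ : ℕ → ℝ := fun j => (2:ℝ)^((j:ℤ)-k) with hρ
  have hρpos : ∀ j, 0 < ρ j := fun j => zpow_pos h2 _
  set T : ℕ → Set (EuclideanSpace ℝ (Fin n)) := fun j =>
    if j = 0 then closedBall x (ρ 0) else closedBall x (ρ j) \ ball x (ρ (j-1)) with hT
  -- coverage
  have hcover : (⋃ j, T j) = Set.univ := by
    apply Set.eq_univ_of_forall
    intro y
    by_cases h0 : dist y x ≤ ρ 0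
    · exact Set.mem_iUnion.2 ⟨0, by simp [hT, Metric.mem_closedBall, h0]⟩
    · have hex : ∃ j : ℕ, dist y x ≤ ρ j := by
        obtain ⟨m, hm⟩ := pow_unbounded_of_one_lt (dist y x * (2:ℝ)^(k:ℤ)) one_lt_two
        refine ⟨m, ?_⟩
        have hk : (0:ℝ) < (2:ℝ)^(k:ℤ) := zpow_pos h2 _
        have : dist y x < (2:ℝ)^(m:ℤ) * (2:ℝ)^(-k:ℤ) := by
          rw [← zpow_natCast (2:ℝ) m] at hm
          calc dist y x = dist y x * (2:ℝ)^(k:ℤ) * (2:ℝ)^(-k:ℤ) := by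
                rw [mul_assoc, ← zpow_add₀ (two_ne_zero (α := ℝ))]; simp
            _ < (2:ℝ)^(m:ℤ) * (2:ℝ)^(-k:ℤ) := by
                exact mul_lt_mul_of_pos_right hm (zpow_pos h2 _)
        rw [← zpow_add₀ (two_ne_zero (α := ℝ))] at this
        simpa [hρ, sub_eq_add_neg] using this.le
      set j₀ := Nat.find hex with hj₀
      have hj0spec : dist y x ≤ ρ j₀ := Nat.find_spec hex
      have hj0ne : j₀ ≠ 0 := by
        intro hc
        exact h0 (hc ▸ hj0spec)
      refine Set.mem_iUnion.2 ⟨j₀, ?_⟩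
      simp only [hT, if_neg hj0ne]
      refine ⟨Metric.mem_closedBall.2 hj0spec, ?_⟩
      intro hball
      have hlt : j₀ - 1 < j₀ := Nat.sub_lt (Nat.pos_of_ne_zero hj0ne) one_pos
      exact Nat.find_min hex hlt (Metric.mem_ball.1 hball).le
  have hTmeas : ∀ j, MeasurableSet (T j) := by
    intro j
    by_cases hj : j = 0 <;>
      simp only [hT, hj, if_pos, if_neg, if_true] <;>
      first
        | exact measurableSet_closedBall
        | exact (measurableSet_closedBall).diff measurableSet_ball
  have hTsub : ∀ j, T j ⊆ closedBall x (ρ j) := by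
    intro j
    by_cases hj : j = 0
    · subst hj; simp [hT]
    · simp only [hT, if_neg hj]; exact Set.diff_subset
  -- base bound on annuli
  have hbase : ∀ j : ℕ, ∀ y ∈ T j, (2:ℝ)^((j:ℝ)-1) ≤ 1 + (2:ℝ)^(k:ℝ) * ‖x - y‖ := by
    intro j y hy
    have hnorm : (0:ℝ) ≤ (2:ℝ)^(k:ℝ) * ‖x - y‖ :=
      mul_nonneg (Real.rpow_nonneg h2.le _) (norm_nonneg _)
    cases j with
    | zero =>
      calc (2:ℝ)^(((0:ℕ):ℝ)-1) = (2:ℝ)^((-1:ℤ):ℝ) := by norm_num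
        _ = (2:ℝ)^(-1:ℤ) := Real.rpow_intCast 2 (-1)
        _ ≤ 1 := by norm_num
        _ ≤ 1 + (2:ℝ)^(k:ℝ) * ‖x - y‖ := le_add_of_nonneg_right hnorm
    | succ m =>
      simp only [hT, if_neg (Nat.succ_ne_zero m)] at hy
      have hdist : ρ m ≤ dist y x := by
        have := hy.2
        simp only [Metric.mem_ball, not_lt] at this
        simpa using this
      have hxy : ‖x - y‖ = dist y x := by
        rw [dist_comm, dist_eq_norm]
      have hkr : (2:ℝ)^(k:ℝ) = (2:ℝ)^(k:ℤ) := Real.rpow_intCast 2 k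
      have hcast : ((m+1:ℕ):ℝ) - 1 = ((m:ℤ):ℝ) := by push_cast; ring
      have hmain : (2:ℝ)^((m:ℤ)) ≤ (2:ℝ)^(k:ℝ) * ‖x - y‖ := by
        rw [hkr, hxy]
        calc (2:ℝ)^(m:ℤ) = (2:ℝ)^(k:ℤ) * ρ m := by
              rw [hρ]; dsimp only
              rw [← zpow_add₀ (two_ne_zero (α := ℝ))]; congr 1; ring
          _ ≤ (2:ℝ)^(k:ℤ) * dist y x := mul_le_mul_of_nonneg_left hdist (zpow_pos h2 k).le
      calc (2:ℝ)^(((m+1:ℕ):ℝ)-1) = (2:ℝ)^((m:ℤ):ℝ) := by rw [hcast]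
        _ = (2:ℝ)^(m:ℤ) := Real.rpow_intCast 2 m
        _ ≤ (2:ℝ)^(k:ℝ) * ‖x - y‖ := hmain
        _ ≤ 1 + (2:ℝ)^(k:ℝ) * ‖x - y‖ := le_add_of_nonneg_left one_pos.le
  
  set v1 := volume (ball (0:EuclideanSpace ℝ (Fin n)) 1) with hv1
  have hNpos : (0:ℝ) < N := lt_of_le_of_lt (Nat.cast_nonneg n) hN
  have key : ∀ j : ℕ,
      ∫⁻ y in T j, ENNReal.ofReal ((2:ℝ)^((k:ℝ)*(n:ℝ)) * (1 + (2:ℝ)^(k:ℝ) * ‖x - y‖)^(-N)) * h y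
        ≤ ENNReal.ofReal ((2:ℝ)^(N+(n:ℝ)) * ((2:ℝ)^((n:ℝ)-N))^j) * (v1 * HLmax h x) := by
    intro j
    set κ := (2:ℝ)^((k:ℝ)*(n:ℝ)) * ((2:ℝ)^((j:ℝ)-1))^(-N) with hκ
    have hκ0 : 0 ≤ κ :=
      mul_nonneg (Real.rpow_nonneg h2.le _) (Real.rpow_nonneg (Real.rpow_nonneg h2.le _) _)
    have hker : ∀ y ∈ T j,
        ENNReal.ofReal ((2:ℝ)^((k:ℝ)*(n:ℝ)) * (1 + (2:ℝ)^(k:ℝ) * ‖x - y‖)^(-N))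
          ≤ ENNReal.ofReal κ := fun y hy =>
      ENNReal.ofReal_le_ofReal (mul_le_mul_of_nonneg_left
        (Real.rpow_le_rpow_of_nonpos (Real.rpow_pos_of_pos h2 _) (hbase j y hy)
          (neg_nonpos.2 hNpos.le)) (Real.rpow_nonneg h2.le _))
    have hsub2 : T j ⊆ ball x (2 * ρ j) :=
      (hTsub j).trans (closedBall_subset_ball (by linarith [hρpos j]))
    calc ∫⁻ y in T j, ENNReal.ofReal ((2:ℝ)^((k:ℝ)*(n:ℝ)) * (1 + (2:ℝ)^(k:ℝ) * ‖x - y‖)^(-N)) * h y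
        ≤ ∫⁻ y in T j, ENNReal.ofReal κ * h y :=
          setLIntegral_mono' (hTmeas j) (fun y hy => mul_le_mul_left (hker y hy) _)
      _ = ENNReal.ofReal κ * ∫⁻ y in T j, h y := lintegral_const_mul' _ _ ENNReal.ofReal_ne_top
      _ ≤ ENNReal.ofReal κ * ∫⁻ y in ball x (2 * ρ j), h y :=
          mul_le_mul_right (lintegral_mono_set hsub2) _
      _ ≤ ENNReal.ofReal κ * (volume (ball x (2 * ρ j)) * HLmax h x) :=
          mul_le_mul_right (aux_hl h x (by positivity)) _
      _ = ENNReal.ofReal (κ * (2 * ρ j)^n) * (v1 * HLmax h x) := by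
          rw [my_ball_vol n x (by positivity), ENNReal.ofReal_mul hκ0]
          ring
      _ = ENNReal.ofReal ((2:ℝ)^(N+(n:ℝ)) * ((2:ℝ)^((n:ℝ)-N))^j) * (v1 * HLmax h x) := by
          rw [hκ, exp_calc]
  have huniv : ∫⁻ y, ENNReal.ofReal ((2:ℝ)^((k:ℝ)*(n:ℝ)) * (1 + (2:ℝ)^(k:ℝ) * ‖x - y‖)^(-N)) * h y
      = ∫⁻ y in ⋃ j, T j, ENNReal.ofReal ((2:ℝ)^((k:ℝ)*(n:ℝ)) * (1 + (2:ℝ)^(k:ℝ) * ‖x - y‖)^(-N)) * h y := by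
    rw [hcover, Measure.restrict_univ]
  rw [huniv]
  refine le_trans (lintegral_iUnion_le T _) ?_
  refine le_trans (ENNReal.tsum_le_tsum key) ?_
  rw [ENNReal.tsum_mul_right]
  have hq0 : 0 ≤ (2:ℝ)^((n:ℝ)-N) := Real.rpow_nonneg h2.le _
  have hq1 : (2:ℝ)^((n:ℝ)-N) < 1 :=
    Real.rpow_lt_one_of_one_lt_of_neg one_lt_two (by linarith)
  have hc0 : 0 ≤ (2:ℝ)^(N+(n:ℝ)) := Real.rpow_nonneg h2.le _
  have : ∑' j:ℕ, ENNReal.ofReal ((2:ℝ)^(N+(n:ℝ)) * ((2:ℝ)^((n:ℝ)-N))^j)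
      = ENNReal.ofReal ((2:ℝ)^(N+(n:ℝ)) * (1 - (2:ℝ)^((n:ℝ)-N))⁻¹) := by
    simp_rw [ENNReal.ofReal_mul hc0, ENNReal.ofReal_pow hq0, ENNReal.tsum_mul_left,
      ENNReal.tsum_geometric]
    congr 1
    rw [← ENNReal.ofReal_one, ← ENNReal.ofReal_sub _ hq0, ENNReal.ofReal_inv_of_pos (by linarith)]
  rw [this]

lemma coord_le_norm {n : ℕ} (z : EuclideanSpace ℝ (Fin n)) (i : Fin n) : |z i| ≤ ‖z‖ := by
  rw [EuclideanSpace.norm_eq]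
  have h1 : |z i| = Real.sqrt (‖z i‖^2) := by
    rw [Real.sqrt_sq_eq_abs, Real.norm_eq_abs, abs_abs]
  rw [h1]
  apply Real.sqrt_le_sqrt
  exact Finset.single_le_sum (fun j _ => sq_nonneg ‖z j‖) (Finset.mem_univ i)

lemma norm_le_of_coord {n : ℕ} (z : EuclideanSpace ℝ (Fin n)) (c : Fin n → ℝ)
    (h : ∀ i, |z i| ≤ c i) : ‖z‖ ≤ Real.sqrt (∑ i, (c i)^2) := by
  rw [EuclideanSpace.norm_eq]
  apply Real.sqrt_le_sqrt
  apply Finset.sum_le_sum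
  intro i _
  rw [Real.norm_eq_abs]
  exact pow_le_pow_left₀ (abs_nonneg _) (h i) 2

lemma dyadicCube_measurable {n : ℕ} (J : ℤ) (v : Fin n → ℤ) :
    MeasurableSet (dyadicCube n J v) := by
  have : dyadicCube n J v = ⋂ i, ((fun x : EuclideanSpace ℝ (Fin n) => x i) ⁻¹'
      (Set.Ioo ((2:ℝ)^(-J) * (v i : ℝ)) ((2:ℝ)^(-J) * ((v i : ℝ) + 1)))) := by
    ext x; simp [dyadicCube, Set.mem_iInter, Set.mem_Ioo, forall_and]
  rw [this]
  exact MeasurableSet.iInter fun i => (EuclideanSpace.proj (𝕜 := ℝ) i).continuous.measurable measurableSet_Ioo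

lemma hyperplane_null {n : ℕ} (i : Fin n) (c : ℝ) :
    volume {y : EuclideanSpace ℝ (Fin n) | y i = c} = 0 := by
  have hker : volume {y : EuclideanSpace ℝ (Fin n) | y i = 0} = 0 := by
    have hs : LinearMap.ker (EuclideanSpace.projₗ (𝕜 := ℝ) (ι := Fin n) i) ≠ ⊤ := by
      intro h
      rw [LinearMap.ker_eq_top] at h
      have := DFunLike.congr_fun h (EuclideanSpace.single i (1:ℝ))
      simpa [EuclideanSpace.single_apply] using this
    have h0 := Measure.addHaar_submodule (volume : Measure (EuclideanSpace ℝ (Fin n)))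
      (LinearMap.ker (EuclideanSpace.projₗ (𝕜 := ℝ) (ι := Fin n) i)) hs
    have hset : {y : EuclideanSpace ℝ (Fin n) | y i = 0}
        = (LinearMap.ker (EuclideanSpace.projₗ (𝕜 := ℝ) (ι := Fin n) i) : Set _) := by
      ext y
      simp only [Set.mem_setOf_eq, SetLike.mem_coe, LinearMap.mem_ker]
      rfl
    rw [hset]
    exact h0
  have heq : {y : EuclideanSpace ℝ (Fin n) | y i = c}
      = (fun y : EuclideanSpace ℝ (Fin n) => y + (-(c • EuclideanSpace.single i (1:ℝ)))) ⁻¹'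
        {y : EuclideanSpace ℝ (Fin n) | y i = 0} := by
    ext y
    have hcoord : (y + (-(c • EuclideanSpace.single i (1:ℝ)))) i = y i - c := by
      simp [EuclideanSpace.single_apply]
      ring
    simp only [Set.mem_preimage, Set.mem_setOf_eq, hcoord, sub_eq_zero]
  rw [heq, measure_preimage_add_right]
  exact hker

lemma cubes_cover_ae {n : ℕ} (J : ℤ) :
    volume ((⋃ w : Fin n → ℤ, dyadicCube n J w)ᶜ) = 0 := by
  set D := (2:ℝ)^(-J) with hD
  have hDpos : 0 < D := zpow_pos two_pos _
  have hsub : (⋃ w : Fin n → ℤ, dyadicCube n J w)ᶜ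
      ⊆ ⋃ (i : Fin n), ⋃ (z : ℤ), {y : EuclideanSpace ℝ (Fin n) | y i = D * z} := by
    intro y hy
    simp only [Set.mem_compl_iff, Set.mem_iUnion, not_exists] at hy
    by_cases hex : ∃ i : Fin n, y i = D * (⌊y i / D⌋ : ℤ)
    · obtain ⟨i, hi⟩ := hex
      exact Set.mem_iUnion.2 ⟨i, Set.mem_iUnion.2 ⟨⌊y i / D⌋, hi⟩⟩
    · exfalso
      push_neg at hex
      apply hy (fun i => ⌊y i / D⌋)
      intro i
      have h1 : (⌊y i / D⌋ : ℝ) ≤ y i / D := Int.floor_le _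
      have h2 : y i / D < ⌊y i / D⌋ + 1 := Int.lt_floor_add_one _
      constructor
      · have hle : (⌊y i / D⌋ : ℝ) * D ≤ y i := (le_div_iff₀ hDpos).1 h1
        rcases lt_or_eq_of_le hle with h | h
        · calc D * ((⌊y i / D⌋ : ℤ) : ℝ) = (⌊y i / D⌋ : ℝ) * D := mul_comm _ _
            _ < y i := h
        · exact absurd (h.symm.trans (mul_comm _ _)) (hex i)
      · calc y i = (y i / D) * D := by field_simp
          _ < ((⌊y i / D⌋ : ℝ) + 1) * D := by
              exact mul_lt_mul_of_pos_right h2 hDpos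
          _ = D * ((⌊y i / D⌋ : ℝ) + 1) := by ring
  refine measure_mono_null hsub ?_
  refine measure_iUnion_null fun i => measure_iUnion_null fun z => hyperplane_null i _

lemma cube_coord_ub {n : ℕ} {J : ℤ} {v w : Fin n → ℤ} {x y : EuclideanSpace ℝ (Fin n)}
    (hx : x ∈ dyadicCube n J v) (hy : y ∈ dyadicCube n J w) (i : Fin n) :
    |x i - y i| ≤ (2:ℝ)^(-J) * (|(v i : ℝ) - (w i : ℝ)| + 1) := by
  have hD : (0:ℝ) < (2:ℝ)^(-J) := zpow_pos two_pos _
  obtain ⟨hx1, hx2⟩ := hx i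
  obtain ⟨hy1, hy2⟩ := hy i
  have h3 : (2:ℝ)^(-J) * ((v i : ℝ) - w i) ≤ (2:ℝ)^(-J) * |(v i : ℝ) - w i| :=
    mul_le_mul_of_nonneg_left (le_abs_self _) hD.le
  have h4 : (2:ℝ)^(-J) * ((w i : ℝ) - v i) ≤ (2:ℝ)^(-J) * |(v i : ℝ) - w i| :=
    mul_le_mul_of_nonneg_left (by rw [abs_sub_comm]; exact le_abs_self _) hD.le
  rw [abs_le]
  constructor <;> nlinarith

lemma cube_coord_lb {n : ℕ} {J : ℤ} {v w : Fin n → ℤ} {x y : EuclideanSpace ℝ (Fin n)}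
    (hx : x ∈ dyadicCube n J v) (hy : y ∈ dyadicCube n J w) (i : Fin n) :
    (2:ℝ)^(-J) * (|(v i : ℝ) - (w i : ℝ)| - 1) ≤ |x i - y i| := by
  have hD : (0:ℝ) < (2:ℝ)^(-J) := zpow_pos two_pos _
  obtain ⟨hx1, hx2⟩ := hx i
  obtain ⟨hy1, hy2⟩ := hy i
  rcases le_or_gt (|(v i : ℝ) - w i|) 1 with h | h
  · calc (2:ℝ)^(-J) * (|(v i : ℝ) - w i| - 1) ≤ 0 :=
          mul_nonpos_of_nonneg_of_nonpos hD.le (by linarith)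
      _ ≤ |x i - y i| := abs_nonneg _
  · have h5 := le_abs_self (x i - y i)
    have h6 := neg_abs_le (x i - y i)
    rcases abs_cases ((v i : ℝ) - w i) with ⟨he, hs⟩ | ⟨he, hs⟩ <;> rw [he] <;> nlinarith

lemma intVec_sub_apply {n : ℕ} (v w : Fin n → ℤ) (i : Fin n) :
    (intVec n v - intVec n w) i = (v i : ℝ) - (w i : ℝ) := by simp [intVec]

lemma cube_dist_ub {n : ℕ} {J : ℤ} {v w : Fin n → ℤ} {x y : EuclideanSpace ℝ (Fin n)}
    (hx : x ∈ dyadicCube n J v) (hy : y ∈ dyadicCube n J w) :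
    ‖x - y‖ ≤ Real.sqrt n * ((2:ℝ)^(-J) * (‖intVec n v - intVec n w‖ + 1)) := by
  set D := (2:ℝ)^(-J) with hD
  have hDpos : 0 < D := zpow_pos two_pos _
  set m := ‖intVec n v - intVec n w‖ with hm
  have hm0 : 0 ≤ m := norm_nonneg _
  have hcoord : ∀ i, |(x - y) i| ≤ D * (m + 1) := by
    intro i
    have h1 : |(v i : ℝ) - (w i : ℝ)| ≤ m := by
      rw [← intVec_sub_apply v w i]
      exact coord_le_norm _ i
    have h2 : (x - y) i = x i - y i := rfl
    rw [h2]
    calc |x i - y i| ≤ D * (|(v i : ℝ) - (w i : ℝ)| + 1) := cube_coord_ub hx hy i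
      _ ≤ D * (m + 1) := mul_le_mul_of_nonneg_left (by linarith) hDpos.le
  calc ‖x - y‖ ≤ Real.sqrt (∑ _i : Fin n, (D * (m + 1))^2) :=
        norm_le_of_coord _ _ hcoord
    _ = Real.sqrt (n * (D * (m + 1))^2) := by rw [Finset.sum_const]; simp [nsmul_eq_mul]
    _ = Real.sqrt n * (D * (m + 1)) := by
        rw [Real.sqrt_mul (Nat.cast_nonneg n), Real.sqrt_sq (by positivity)]

lemma cube_dist_lb {n : ℕ} {J : ℤ} {v w : Fin n → ℤ} {x y : EuclideanSpace ℝ (Fin n)}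
    (hn : 0 < n) (hx : x ∈ dyadicCube n J v) (hy : y ∈ dyadicCube n J w) :
    (2:ℝ)^(-J) * (‖intVec n v - intVec n w‖ / Real.sqrt n - 1) ≤ ‖x - y‖ := by
  set D := (2:ℝ)^(-J) with hD
  have hDpos : 0 < D := zpow_pos two_pos _
  set m := ‖intVec n v - intVec n w‖ with hm
  have hm0 : 0 ≤ m := norm_nonneg _
  have hsq : m^2 = ∑ i, ((v i : ℝ) - (w i : ℝ))^2 := by
    rw [hm, EuclideanSpace.norm_eq, Real.sq_sqrt (by positivity)]
    apply Finset.sum_congr rfl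
    intro i _
    rw [intVec_sub_apply, Real.norm_eq_abs, sq_abs]
  have hne0 : (n:ℝ) ≠ 0 := Nat.cast_ne_zero.2 hn.ne'
  have hex : ∃ i : Fin n, m^2 / n ≤ ((v i : ℝ) - (w i : ℝ))^2 := by
    have hne : (Finset.univ : Finset (Fin n)).Nonempty := Finset.univ_nonempty_iff.2 ⟨⟨0, hn⟩⟩
    have hsum : ∑ _i : Fin n, (m^2 / (n:ℝ)) ≤ ∑ i, ((v i : ℝ) - (w i : ℝ))^2 := by
      rw [Finset.sum_const, ← hsq]
      simp only [nsmul_eq_mul, Finset.card_univ, Fintype.card_fin]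
      rw [mul_comm, div_mul_cancel₀ _ hne0]
    obtain ⟨i, _, hi⟩ := Finset.exists_le_of_sum_le hne hsum
    exact ⟨i, hi⟩
  obtain ⟨i, hi⟩ := hex
  have habs : m / Real.sqrt n ≤ |(v i : ℝ) - (w i : ℝ)| := by
    have h1 : Real.sqrt (m^2 / n) ≤ |(v i : ℝ) - (w i : ℝ)| := by
      have := Real.sqrt_le_sqrt hi
      rwa [Real.sqrt_sq_eq_abs] at this
    have h2 : Real.sqrt (m^2 / n) = m / Real.sqrt n := by
      rw [Real.sqrt_div (by positivity), Real.sqrt_sq hm0]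
    linarith
  calc D * (m / Real.sqrt n - 1) ≤ D * (|(v i : ℝ) - (w i : ℝ)| - 1) :=
        mul_le_mul_of_nonneg_left (by linarith) hDpos.le
    _ ≤ |x i - y i| := cube_coord_lb hx hy i
    _ = |(x - y) i| := rfl
    _ ≤ ‖x - y‖ := coord_le_norm _ i

lemma far_real {n : ℕ} (hn : 0 < n) {N : ℝ} (hN : (n:ℝ) < N) {J k : ℤ} (hJk : J ≤ k) {m : ℝ}
    (hm : 2*Real.sqrt n + 1 < m) :
    ((2:ℝ)^((k:ℝ)*(n:ℝ)) * ((2:ℝ)^((k:ℝ)-(J:ℝ)) * (m/(2*Real.sqrt n)))^(-N)) *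
      (2*Real.sqrt n * ((2:ℝ)^(-(J:ℝ)) * (1+m)))^n
      ≤ ((2*Real.sqrt n)^(N+(n:ℝ)) * (2:ℝ)^N) * (1+m)^(-(N-(n:ℝ))) := by
  set s := Real.sqrt (n:ℝ) with hs
  have hs1 : 1 ≤ s := by
    rw [hs]
    rw [show (1:ℝ) = Real.sqrt 1 by simp]
    exact Real.sqrt_le_sqrt (by exact_mod_cast hn)
  have h2 : (0:ℝ) < 2 := two_pos
  have h2s : (0:ℝ) < 2*s := by linarith
  have hm1 : 1 < m := by nlinarith
  have hmpos : (0:ℝ) < m := by linarith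
  have h1m : (0:ℝ) < 1+m := by linarith
  have hN0 : (0:ℝ) < N := lt_of_le_of_lt (Nat.cast_nonneg n) hN
  have hF1 : (2:ℝ)^(((k:ℝ)-(J:ℝ))*((n:ℝ)-N)) ≤ 1 := by
    apply Real.rpow_le_one_of_one_le_of_nonpos one_le_two
    have hk : (J:ℝ) ≤ (k:ℝ) := by exact_mod_cast hJk
    nlinarith
  have hF2 : m^(-N) * (1+m)^((n:ℝ)) ≤ (2:ℝ)^N * (1+m)^(-(N-(n:ℝ))) := by
    have hstep : m^(-N) ≤ ((1+m)/2)^(-N) :=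
      Real.rpow_le_rpow_of_nonpos (by linarith) (by linarith) (by linarith)
    have hsplit : ((1+m)/2)^(-N) = (1+m)^(-N) * (2:ℝ)^N := by
      rw [Real.div_rpow (by linarith) (by norm_num), div_eq_mul_inv,
        Real.rpow_neg h2.le N, inv_inv]
    calc m^(-N) * (1+m)^((n:ℝ))
        ≤ ((1+m)/2)^(-N) * (1+m)^((n:ℝ)) :=
          mul_le_mul_of_nonneg_right hstep (Real.rpow_nonneg h1m.le _)
      _ = (2:ℝ)^N * ((1+m)^(-N) * (1+m)^((n:ℝ))) := by rw [hsplit]; ring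
      _ = (2:ℝ)^N * (1+m)^(-(N-(n:ℝ))) := by
          rw [← Real.rpow_add h1m]
          congr 1
          ring
  have hEQ : ((2:ℝ)^((k:ℝ)*(n:ℝ)) * ((2:ℝ)^((k:ℝ)-(J:ℝ)) * (m/(2*s)))^(-N)) *
      (2*s * ((2:ℝ)^(-(J:ℝ)) * (1+m)))^n
      = (2:ℝ)^(((k:ℝ)-(J:ℝ))*((n:ℝ)-N)) * ((2*s)^(N+(n:ℝ)) * (m^(-N) * (1+m)^((n:ℝ)))) := by
    have hspos : (0:ℝ) < s := lt_of_lt_of_le one_pos hs1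
    rw [Real.mul_rpow (by positivity) (by positivity), div_eq_mul_inv,
      Real.mul_rpow (by positivity) (by positivity), Real.inv_rpow (by positivity),
      Real.mul_rpow h2.le hspos.le, mul_pow, mul_pow, mul_pow,
      Real.mul_rpow h2.le hspos.le,
      ← Real.rpow_natCast 2 n, ← Real.rpow_natCast s n, ← Real.rpow_natCast (1+m) n,
      ← Real.rpow_natCast ((2:ℝ)^(-(J:ℝ))) n, ← Real.rpow_mul h2.le, ← Real.rpow_mul h2.le]
    simp only [Real.rpow_def_of_pos h2, Real.rpow_def_of_pos hmpos,
      Real.rpow_def_of_pos h1m, Real.rpow_def_of_pos hspos, mul_inv, ← Real.exp_neg,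
      ← Real.exp_add]
    congr 1
    ring
  calc ((2:ℝ)^((k:ℝ)*(n:ℝ)) * ((2:ℝ)^((k:ℝ)-(J:ℝ)) * (m/(2*s)))^(-N)) *
      (2*s * ((2:ℝ)^(-(J:ℝ)) * (1+m)))^n
      = (2:ℝ)^(((k:ℝ)-(J:ℝ))*((n:ℝ)-N)) * ((2*s)^(N+(n:ℝ)) * (m^(-N) * (1+m)^((n:ℝ)))) := hEQ
    _ ≤ 1 * ((2*s)^(N+(n:ℝ)) * (m^(-N) * (1+m)^((n:ℝ)))) := by
        apply mul_le_mul_of_nonneg_right hF1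
        positivity
    _ = (2*s)^(N+(n:ℝ)) * (m^(-N) * (1+m)^((n:ℝ))) := one_mul _
    _ ≤ (2*s)^(N+(n:ℝ)) * ((2:ℝ)^N * (1+m)^(-(N-(n:ℝ)))) :=
        mul_le_mul_of_nonneg_left hF2 (Real.rpow_nonneg h2s.le _)
    _ = ((2*s)^(N+(n:ℝ)) * (2:ℝ)^N) * (1+m)^(-(N-(n:ℝ))) := by ring


set_option maxHeartbeats 2000000 in
/-- **Localized Peetre-kernel estimate.** Let `N > n`. There is `C = C(N) > 0` such that for
every `g`, `J ∈ ℤ`, `v ∈ ℤⁿ`, every integer `k ≥ J` and every `x ∈ Q_{J,v}`,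
`∫ 2^{kn}|g(y)|(1+2^k|x−y|)^{−N} dy ≤ C Σ_w (1+|v−w|)^{−(N−n)} M(𝟙_{Q_{J,w}} g)(x)`. -/
theorem stmt6 (n : ℕ) (N : ℝ) (hN : (n : ℝ) < N) :
    ∃ C : ℝ≥0∞, 0 < C ∧ C < ∞ ∧
      ∀ g : EuclideanSpace ℝ (Fin n) → ℝ≥0∞, Measurable g →
        ∀ (J k : ℤ), J ≤ k → ∀ (v : Fin n → ℤ), ∀ x ∈ dyadicCube n J v,
          (∫⁻ y, ENNReal.ofReal
                ((2 : ℝ) ^ ((k : ℝ) * (n : ℝ)) * (1 + (2 : ℝ) ^ (k : ℝ) * ‖x - y‖) ^ (-N)) * g y)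
            ≤ C * ∑' w : Fin n → ℤ,
                ENNReal.ofReal ((1 + ‖intVec n v - intVec n w‖) ^ (-(N - (n : ℝ)))) *
                  HLmax ((dyadicCube n J w).indicator g) x := by
  classical
  set s := Real.sqrt (n:ℝ) with hs
  have hs0 : (0:ℝ) ≤ s := Real.sqrt_nonneg _
  have h2 : (0:ℝ) < 2 := two_pos
  have hN0 : (0:ℝ) < N := lt_of_le_of_lt (Nat.cast_nonneg n) hN
  have hq1 : (2:ℝ)^((n:ℝ)-N) < 1 := Real.rpow_lt_one_of_one_lt_of_neg one_lt_two (by linarith)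
  set C1 : ℝ := (2:ℝ)^(N+(n:ℝ)) * (1 - (2:ℝ)^((n:ℝ)-N))⁻¹ with hC1
  set Anear : ℝ := C1 * (2+2*s)^(N-(n:ℝ)) with hAnear
  set Afar : ℝ := (2*s)^(N+(n:ℝ)) * (2:ℝ)^N with hAfar
  set A : ℝ := Anear + Afar with hA
  have hC1pos : 0 < C1 := mul_pos (Real.rpow_pos_of_pos h2 _) (inv_pos.2 (by linarith))
  have hAnearpos : 0 < Anear := mul_pos hC1pos (Real.rpow_pos_of_pos (by linarith) _)
  have hAfar0 : 0 ≤ Afar :=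
    mul_nonneg (Real.rpow_nonneg (by linarith) _) (Real.rpow_nonneg h2.le _)
  have hApos : 0 < A := by rw [hA]; linarith
  set v1 := volume (ball (0:EuclideanSpace ℝ (Fin n)) 1) with hv1
  have hv1pos : 0 < v1 := measure_ball_pos volume _ one_pos
  have hv1top : v1 < ⊤ := measure_ball_lt_top
  refine ⟨ENNReal.ofReal A * v1, ?_, ?_, ?_⟩
  · exact ENNReal.mul_pos (ENNReal.ofReal_pos.2 hApos).ne' hv1pos.ne'
  · exact ENNReal.mul_lt_top ENNReal.ofReal_lt_top hv1top
  intro g hg J k hJk v x hx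
  set D := (2:ℝ)^(-J) with hD
  have hDpos : 0 < D := zpow_pos h2 _
  have hDr : D = (2:ℝ)^(-(J:ℝ)) := by
    rw [hD, ← Real.rpow_intCast 2 (-J), Int.cast_neg]
  have percube : ∀ w : Fin n → ℤ,
      ∫⁻ y in dyadicCube n J w,
          ENNReal.ofReal ((2:ℝ)^((k:ℝ)*(n:ℝ)) * (1 + (2:ℝ)^((k:ℝ)) * ‖x - y‖)^(-N)) * g y
        ≤ (ENNReal.ofReal A * v1) *
            (ENNReal.ofReal ((1 + ‖intVec n v - intVec n w‖)^(-(N-(n:ℝ)))) *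
              HLmax ((dyadicCube n J w).indicator g) x) := by
    intro w
    set m := ‖intVec n v - intVec n w‖ with hm
    have hm0 : (0:ℝ) ≤ m := norm_nonneg _
    have h1m : (0:ℝ) < 1+m := by linarith
    set M := HLmax ((dyadicCube n J w).indicator g) x with hM
    have tail : ∀ B : ℝ, 0 ≤ B → B ≤ A →
        ENNReal.ofReal (B * (1+m)^(-(N-(n:ℝ)))) * (v1 * M)
          ≤ (ENNReal.ofReal A * v1) * (ENNReal.ofReal ((1+m)^(-(N-(n:ℝ)))) * M) := by
      intro B hB0 hBA
      rw [ENNReal.ofReal_mul hB0]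
      calc ENNReal.ofReal B * ENNReal.ofReal ((1+m)^(-(N-(n:ℝ)))) * (v1 * M)
          ≤ ENNReal.ofReal A * ENNReal.ofReal ((1+m)^(-(N-(n:ℝ)))) * (v1 * M) :=
            mul_le_mul_left (mul_le_mul_left (ENNReal.ofReal_le_ofReal hBA) _) _
        _ = (ENNReal.ofReal A * v1) * (ENNReal.ofReal ((1+m)^(-(N-(n:ℝ)))) * M) := by ring
    by_cases hfar : 2*s + 1 < m
    · -- far case
      have hmpos : (0:ℝ) < m := lt_of_le_of_lt (by positivity) hfar
      have hn : 0 < n := by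
        have hzne : intVec n v - intVec n w ≠ 0 := norm_pos_iff.1 (hm ▸ hmpos)
        by_contra hc
        push_neg at hc
        have h0 : n = 0 := Nat.le_zero.1 hc
        apply hzne
        haveI : IsEmpty (Fin n) := by rw [h0]; infer_instance
        exact Subsingleton.elim _ _
      have hs1 : 1 ≤ s := by
        rw [hs, show (1:ℝ) = Real.sqrt 1 by simp]
        exact Real.sqrt_le_sqrt (by exact_mod_cast hn)
      have hspos : (0:ℝ) < s := lt_of_lt_of_le one_pos hs1
      have hm1 : 1 < m := by nlinarith
      set κ := (2:ℝ)^((k:ℝ)*(n:ℝ)) * ((2:ℝ)^((k:ℝ)-(J:ℝ)) * (m/(2*s)))^(-N) with hκ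
      have hκ0 : 0 ≤ κ := by
        apply mul_nonneg (Real.rpow_nonneg h2.le _)
        apply Real.rpow_nonneg
        positivity
      have hul : m/(2*s) ≤ m/s - 1 := by
        rw [div_le_iff₀ (by positivity : (0:ℝ) < 2*s)]
        have hms : (m/s)*s = m := div_mul_cancel₀ m hspos.ne'
        nlinarith
      have hker : ∀ y ∈ dyadicCube n J w,
          ENNReal.ofReal ((2:ℝ)^((k:ℝ)*(n:ℝ)) * (1 + (2:ℝ)^((k:ℝ)) * ‖x - y‖)^(-N))
            ≤ ENNReal.ofReal κ := by
        intro y hy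
        apply ENNReal.ofReal_le_ofReal
        rw [hκ]
        apply mul_le_mul_of_nonneg_left _ (Real.rpow_nonneg h2.le _)
        apply Real.rpow_le_rpow_of_nonpos (by positivity) _ (by linarith)
        have hlow : D * (m/s - 1) ≤ ‖x - y‖ := cube_dist_lb hn hx hy
        have h2k : (0:ℝ) < (2:ℝ)^((k:ℝ)) := Real.rpow_pos_of_pos h2 _
        have hprod : (2:ℝ)^((k:ℝ)) * D = (2:ℝ)^((k:ℝ)-(J:ℝ)) := by
          rw [hDr, ← Real.rpow_add h2]
          congr 1
        calc (2:ℝ)^((k:ℝ)-(J:ℝ)) * (m/(2*s)) = (2:ℝ)^((k:ℝ)) * (D * (m/(2*s))) := by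
              rw [← hprod]; ring
          _ ≤ (2:ℝ)^((k:ℝ)) * (D * (m/s - 1)) :=
              mul_le_mul_of_nonneg_left (mul_le_mul_of_nonneg_left hul hDpos.le) h2k.le
          _ ≤ (2:ℝ)^((k:ℝ)) * ‖x - y‖ := mul_le_mul_of_nonneg_left hlow h2k.le
          _ ≤ 1 + (2:ℝ)^((k:ℝ)) * ‖x - y‖ := le_add_of_nonneg_left one_pos.le
      set R := s*(D*(m+1)) + D with hR
      have hRpos : 0 < R := by positivity
      have hsub : dyadicCube n J w ⊆ ball x R := by
        intro y hy
        rw [Metric.mem_ball, dist_comm, dist_eq_norm]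
        calc ‖x - y‖ ≤ s * (D*(m+1)) := cube_dist_ub hx hy
          _ < R := by rw [hR]; linarith
      have hRle : R ≤ 2*s*(D*(1+m)) := by
        rw [hR]
        nlinarith [mul_nonneg hDpos.le (sub_nonneg.2 hs1),
          mul_nonneg (mul_nonneg hspos.le hDpos.le) hm0]
      calc ∫⁻ y in dyadicCube n J w,
            ENNReal.ofReal ((2:ℝ)^((k:ℝ)*(n:ℝ)) * (1 + (2:ℝ)^((k:ℝ)) * ‖x - y‖)^(-N)) * g y
          ≤ ∫⁻ y in dyadicCube n J w, ENNReal.ofReal κ * g y :=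
            setLIntegral_mono' (dyadicCube_measurable J w)
              (fun y hy => mul_le_mul_left (hker y hy) _)
        _ = ENNReal.ofReal κ * ∫⁻ y in dyadicCube n J w, g y :=
            lintegral_const_mul' _ _ ENNReal.ofReal_ne_top
        _ = ENNReal.ofReal κ * ∫⁻ y in ball x R, (dyadicCube n J w).indicator g y := by
            rw [lintegral_indicator (dyadicCube_measurable J w),
              Measure.restrict_restrict (dyadicCube_measurable J w),
              Set.inter_eq_self_of_subset_left hsub]
        _ ≤ ENNReal.ofReal κ * (volume (ball x R) * M) :=
            mul_le_mul_right (aux_hl _ x hRpos) _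
        _ = ENNReal.ofReal (κ * R^n) * (v1 * M) := by
            rw [my_ball_vol n x hRpos, ENNReal.ofReal_mul hκ0, hv1]
            ring
        _ ≤ ENNReal.ofReal (Afar * (1+m)^(-(N-(n:ℝ)))) * (v1 * M) := by
            apply mul_le_mul_left
            apply ENNReal.ofReal_le_ofReal
            have h1 : κ * R^n ≤ κ * (2*s*(D*(1+m)))^n :=
              mul_le_mul_of_nonneg_left (pow_le_pow_left₀ hRpos.le hRle n) hκ0
            refine h1.trans ?_
            rw [hκ, hDr, hAfar, hs]
            exact far_real hn hN hJk (by rw [← hs]; exact hfar)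
        _ ≤ (ENNReal.ofReal A * v1) *
              (ENNReal.ofReal ((1+m)^(-(N-(n:ℝ)))) * M) :=
            tail Afar hAfar0 (by rw [hA]; linarith)
    · -- near case
      have hmle : m ≤ 2*s+1 := not_lt.1 hfar
      have hind : ∫⁻ y in dyadicCube n J w,
            ENNReal.ofReal ((2:ℝ)^((k:ℝ)*(n:ℝ)) * (1 + (2:ℝ)^((k:ℝ)) * ‖x - y‖)^(-N)) * g y
          = ∫⁻ y, ENNReal.ofReal ((2:ℝ)^((k:ℝ)*(n:ℝ)) * (1 + (2:ℝ)^((k:ℝ)) * ‖x - y‖)^(-N)) *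
              ((dyadicCube n J w).indicator g) y := by
        rw [← lintegral_indicator (dyadicCube_measurable J w)]
        congr 1
        funext y
        by_cases hy : y ∈ dyadicCube n J w
        · simp [Set.indicator_of_mem hy]
        · simp [Set.indicator_of_notMem hy]
      have hpeetre := peetre_classical hN k ((dyadicCube n J w).indicator g)
        (hg.indicator (dyadicCube_measurable J w)) x
      have hreal : (1:ℝ) ≤ (2+2*s)^(N-(n:ℝ)) * (1+m)^(-(N-(n:ℝ))) := by
        have h1 : (1+m)^(N-(n:ℝ)) ≤ (2+2*s)^(N-(n:ℝ)) :=
          Real.rpow_le_rpow h1m.le (by linarith) (by linarith)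
        have h2' : (1+m)^(N-(n:ℝ)) * (1+m)^(-(N-(n:ℝ))) = 1 := by
          rw [← Real.rpow_add h1m]; simp
        have h3 : (0:ℝ) ≤ (1+m)^(-(N-(n:ℝ))) := Real.rpow_nonneg h1m.le _
        nlinarith
      calc ∫⁻ y in dyadicCube n J w,
            ENNReal.ofReal ((2:ℝ)^((k:ℝ)*(n:ℝ)) * (1 + (2:ℝ)^((k:ℝ)) * ‖x - y‖)^(-N)) * g y
          = ∫⁻ y, ENNReal.ofReal ((2:ℝ)^((k:ℝ)*(n:ℝ)) * (1 + (2:ℝ)^((k:ℝ)) * ‖x - y‖)^(-N)) *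
              ((dyadicCube n J w).indicator g) y := hind
        _ ≤ ENNReal.ofReal C1 * (v1 * M) := hpeetre
        _ ≤ ENNReal.ofReal ((2+2*s)^(N-(n:ℝ)) * (1+m)^(-(N-(n:ℝ)))) *
              (ENNReal.ofReal C1 * (v1 * M)) :=
            le_mul_of_one_le_left zero_le
              (by rw [← ENNReal.ofReal_one]; exact ENNReal.ofReal_le_ofReal hreal)
        _ = ENNReal.ofReal (Anear * (1+m)^(-(N-(n:ℝ)))) * (v1 * M) := by
            rw [hAnear, ENNReal.ofReal_mul (by positivity : (0:ℝ) ≤ (2+2*s)^(N-(n:ℝ))),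
              ENNReal.ofReal_mul (mul_nonneg hC1pos.le (by positivity)),
              ENNReal.ofReal_mul hC1pos.le]
            ring
        _ ≤ (ENNReal.ofReal A * v1) *
              (ENNReal.ofReal ((1+m)^(-(N-(n:ℝ)))) * M) :=
            tail Anear hAnearpos.le (by rw [hA]; linarith)
  have hae : (⋃ w : Fin n → ℤ, dyadicCube n J w)
      =ᵐ[volume] (Set.univ : Set (EuclideanSpace ℝ (Fin n))) :=
    (MeasureTheory.ae_eq_univ).2 (cubes_cover_ae J)
  have hstep1 : ∫⁻ y, ENNReal.ofReal
        ((2:ℝ)^((k:ℝ)*(n:ℝ)) * (1 + (2:ℝ)^((k:ℝ)) * ‖x - y‖)^(-N)) * g y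
      = ∫⁻ y in ⋃ w : Fin n → ℤ, dyadicCube n J w, ENNReal.ofReal
        ((2:ℝ)^((k:ℝ)*(n:ℝ)) * (1 + (2:ℝ)^((k:ℝ)) * ‖x - y‖)^(-N)) * g y := by
    conv_lhs => rw [← Measure.restrict_univ (μ := volume)]
    rw [← Measure.restrict_congr_set hae]
  rw [hstep1]
  calc ∫⁻ y in ⋃ w : Fin n → ℤ, dyadicCube n J w, ENNReal.ofReal
        ((2:ℝ)^((k:ℝ)*(n:ℝ)) * (1 + (2:ℝ)^((k:ℝ)) * ‖x - y‖)^(-N)) * g y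
      ≤ ∑' w : Fin n → ℤ, ∫⁻ y in dyadicCube n J w, ENNReal.ofReal
        ((2:ℝ)^((k:ℝ)*(n:ℝ)) * (1 + (2:ℝ)^((k:ℝ)) * ‖x - y‖)^(-N)) * g y :=
      lintegral_iUnion_le _ _
    _ ≤ ∑' w : Fin n → ℤ, (ENNReal.ofReal A * v1) *
          (ENNReal.ofReal ((1 + ‖intVec n v - intVec n w‖)^(-(N-(n:ℝ)))) *
            HLmax ((dyadicCube n J w).indicator g) x) :=
      ENNReal.tsum_le_tsum percube
    _ = (ENNReal.ofReal A * v1) * ∑' w : Fin n → ℤ,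
          ENNReal.ofReal ((1 + ‖intVec n v - intVec n w‖)^(-(N-(n:ℝ)))) *
            HLmax ((dyadicCube n J w).indicator g) x :=
      ENNReal.tsum_mul_left
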